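/- Degree bound in q: deg_q ((t)_K B_n(q^K t)) ≤ (K^2−K)/2 + (3n^2+n)/2 when 0 ≤ K ≤ n, and ≤ (K^2−K)/2 + (n^2−n)/2 + nK when K > n. -/
import Mathlib


open Finset

/-- q-Pochhammer symbol `(a)_n = ∏_{j=0}^{n-1} (1 - a q^j)`. -/
noncomputable def qPoch (q a : ℝ) (n : ℕ) : ℝ := ∏ j ∈ Finset.range n, (1 - a * q ^ j)

/-- q-exponential `E_q(t) = ∏_{k=0}^∞ (1 - q^k t)⁻¹`. -/
noncomputable def qExp (q t : ℝ) : ℝ := ∏' k : ℕ, (1 - q ^ k * t)⁻¹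

/-- q-binomial coefficient. -/
noncomputable def qBinom (q : ℝ) (n k : ℕ) : ℝ :=
  qPoch q q n / (qPoch q q k * qPoch q q (n - k))

/-- Padé numerator polynomial `A_n(t)`. -/
noncomputable def padeA (q : ℝ) (n : ℕ) (t : ℝ) : ℝ :=
  ∑ k ∈ Finset.range (n + 1),
    qBinom q n k * q ^ (k * n) * qPoch q (q ^ (n + 1)) (n - k) * t ^ k

/-- Padé denominator polynomial `B_n(t)`. -/
noncomputable def padeB (q : ℝ) (n : ℕ) (t : ℝ) : ℝ :=
  ∑ k ∈ Finset.range (n + 1),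
    qBinom q n k * q ^ (k * (k - 1) / 2) * qPoch q (q ^ (n + 1)) (n - k) * (-t) ^ k

/-- Padé remainder `S_n(t)`. -/
noncomputable def padeS (q : ℝ) (n : ℕ) (t : ℝ) : ℝ :=
  (-1) ^ n * t ^ (2 * n + 1) * q ^ ((3 * n ^ 2 + n) / 2) *
    (qPoch q q n / qPoch q q (2 * n + 1)) *
    ∑' k : ℕ, qPoch q (q ^ (n + 1)) k * t ^ k / (qPoch q q k * qPoch q (q ^ (2 * n + 2)) k)

/-- Evaluate `P ∈ ℤ[t][q]` (outer variable `q`, inner variable `t`) at real `q, t`. -/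
noncomputable def evalTQ (P : Polynomial (Polynomial ℤ)) (q t : ℝ) : ℝ :=
  Polynomial.eval q (P.map (Polynomial.eval₂RingHom (Int.castRingHom ℝ) t))

section Aux
open Polynomial


noncomputable def gaussBinom : ℕ → ℕ → Polynomial ℤ
  | 0 => fun k => if k = 0 then 1 else 0
  | n+1 => fun k => match k with
    | 0 => 1
    | k+1 => gaussBinom n k + X ^ (k+1) * gaussBinom n (k+1)

@[simp] lemma gaussBinom_zero_right (n : ℕ) : gaussBinom n 0 = 1 := by cases n <;> rfl

lemma gaussBinom_succ_succ (n k : ℕ) :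
    gaussBinom (n+1) (k+1) = gaussBinom n k + X ^ (k+1) * gaussBinom n (k+1) := rfl

lemma gaussBinom_eq_zero : ∀ {n k : ℕ}, n < k → gaussBinom n k = 0 := by
  intro n
  induction n with
  | zero => intro k hk; match k, hk with | k+1, _ => rfl
  | succ n ih =>
    intro k hk
    match k, hk with
    | k+1, hk =>
      rw [gaussBinom_succ_succ, ih (by omega), ih (by omega), mul_zero, add_zero]

lemma gaussBinom_diag : ∀ n : ℕ, gaussBinom n n = 1 := by
  intro n
  induction n with
  | zero => rfl
  | succ n ih =>
    rw [gaussBinom_succ_succ, ih, gaussBinom_eq_zero (by omega), mul_zero, add_zero]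

lemma gaussBinom_natDegree_le : ∀ n k : ℕ, (gaussBinom n k).natDegree ≤ k * (n - k) := by
  intro n
  induction n with
  | zero =>
    intro k; cases k with
    | zero => simp
    | succ k => rw [gaussBinom_eq_zero (by omega)]; simp
  | succ n ih =>
    intro k; cases k with
    | zero => simp
    | succ k =>
      rw [gaussBinom_succ_succ]
      refine le_trans (natDegree_add_le _ _) (max_le ?_ ?_)
      · exact le_trans (ih k) (by apply Nat.mul_le_mul <;> omega)
      · by_cases h : n ≤ k
        · rw [gaussBinom_eq_zero (by omega), mul_zero]; simp
        · refine le_trans natDegree_mul_le ?_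
          have h1 : (k+1) * (n+1-(k+1)) = (k+1) * (n - (k+1)) + (k+1) := by
            have : n + 1 - (k+1) = (n - (k+1)) + 1 := by omega
            rw [this]; ring
          have h2 := ih (k+1)
          simp only [natDegree_X_pow]
          omega

lemma qPoch_zero (q a : ℝ) : qPoch q a 0 = 1 := by simp [qPoch]
lemma qPoch_succ (q a : ℝ) (m : ℕ) : qPoch q a (m+1) = qPoch q a m * (1 - a * q ^ m) :=
  Finset.prod_range_succ _ _

lemma gaussBinom_eval_mul (q : ℝ) :
    ∀ n k : ℕ, k ≤ n →
      (gaussBinom n k).eval₂ (Int.castRingHom ℝ) q * (qPoch q q k * qPoch q q (n - k))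
        = qPoch q q n := by
  intro n
  induction n with
  | zero =>
    intro k hk
    interval_cases k
    simp [qPoch_zero]
  | succ n ih =>
    intro k hk
    cases k with
    | zero => simp [qPoch_zero]
    | succ k =>
      rcases eq_or_lt_of_le hk with h | h
      · -- k+1 = n+1
        have hk' : k = n := by omega
        subst hk'
        rw [gaussBinom_diag]
        simp [qPoch_zero]
      · -- k+1 < n+1, so k < n
        have hkn : k < n := by omega
        obtain ⟨m, rfl⟩ : ∃ m, n = k + m + 1 := ⟨n - k - 1, by omega⟩
        have hA := ih k (by omega)
        have hB := ih (k+1) (by omega)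
        have e1 : k + m + 1 - k = m + 1 := by omega
        have e2 : k + m + 1 - (k+1) = m := by omega
        have e3 : k + m + 1 + 1 - (k + 1) = m + 1 := by omega
        rw [e1] at hA
        rw [e2] at hB
        rw [gaussBinom_succ_succ, e3]
        rw [eval₂_add, eval₂_mul, eval₂_X_pow]
        rw [qPoch_succ q q (k + m + 1), qPoch_succ q q k, qPoch_succ q q m] at *
        rw [qPoch_succ q q (k+m)] at *
        linear_combination (1 - q * q ^ k) * hA + (q^(k+1) * (1 - q * q ^ m)) * hB

lemma qPoch_self_ne_zero {q : ℝ} (hq : |q| < 1) (m : ℕ) : qPoch q q m ≠ 0 := by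
  refine Finset.prod_ne_zero_iff.mpr fun j _ => ?_
  intro h
  have h1 : q * q ^ j = 1 := by linarith [sub_eq_zero.mp h]
  have h2 : |q * q ^ j| < 1 := by
    rw [abs_mul, abs_pow]
    calc |q| * |q| ^ j ≤ |q| * 1 :=
          mul_le_mul_of_nonneg_left (pow_le_one₀ (abs_nonneg q) hq.le) (abs_nonneg q)
      _ = |q| := by ring
      _ < 1 := hq
  rw [h1] at h2; simp at h2

lemma qBinom_eq_gaussBinom {q : ℝ} (hq : |q| < 1) {n k : ℕ} (hk : k ≤ n) :
    qBinom q n k = (gaussBinom n k).eval₂ (Int.castRingHom ℝ) q := by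
  rw [qBinom, ← gaussBinom_eval_mul q n k hk]
  exact mul_div_cancel_right₀ _
    (mul_ne_zero (qPoch_self_ne_zero hq k) (qPoch_self_ne_zero hq (n-k)))

noncomputable def qQ : Polynomial (Polynomial ℤ) := Polynomial.X
noncomputable def tQ : Polynomial (Polynomial ℤ) := Polynomial.C Polynomial.X

noncomputable def Qpoly (n K : ℕ) : Polynomial (Polynomial ℤ) :=
  (∏ j ∈ Finset.range K, (1 - tQ * qQ ^ j)) *
  ∑ k ∈ Finset.range (n+1),
    (gaussBinom n k).map (Int.castRingHom (Polynomial ℤ)) * qQ ^ (k*(k-1)/2) *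
    (∏ j ∈ Finset.range (n-k), (1 - qQ ^ (n+1) * qQ ^ j)) *
    (-(qQ ^ K * tQ)) ^ k

lemma evalTQ_Qpoly (n K : ℕ) (q t : ℝ) (hq : |q| < 1) :
    evalTQ (Qpoly n K) q t = qPoch q t K * padeB q n (q ^ K * t) := by
  have hcomp : (Polynomial.eval₂RingHom (Int.castRingHom ℝ) t).comp
      (Int.castRingHom (Polynomial ℤ)) = Int.castRingHom ℝ := by
    apply RingHom.ext_int
  rw [evalTQ, eval_map, Qpoly]
  rw [eval₂_mul, eval₂_finset_prod, eval₂_finset_sum]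
  rw [qPoch, padeB]
  congr 1
  · refine Finset.prod_congr rfl fun j _ => ?_
    simp [tQ, qQ, eval₂_sub, eval₂_mul, eval₂_X_pow, eval₂_C]
  · refine Finset.sum_congr rfl fun k hk => ?_
    have hkn : k ≤ n := by simp at hk; omega
    rw [eval₂_mul, eval₂_mul, eval₂_mul, eval₂_pow, eval₂_map, hcomp]
    rw [← qBinom_eq_gaussBinom hq hkn]
    congr 1
    · congr 1
      · congr 1
        simp [qQ, eval₂_X_pow]
      · rw [eval₂_finset_prod, qPoch]
        refine Finset.prod_congr rfl fun j _ => ?_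
        simp [qQ, eval₂_sub, eval₂_mul, eval₂_X_pow, pow_mul]
    · rw [eval₂_pow, eval₂_neg, eval₂_mul]
      simp only [qQ, tQ, eval₂_X_pow, eval₂_C, coe_eval₂RingHom, eval₂_X]

lemma half_id (x : ℕ) : 2 * (x * (x-1) / 2) + x = x * x := by
  have h2 : 2 ∣ x * (x - 1) := by
    cases x with
    | zero => simp
    | succ y =>
      rw [Nat.succ_sub_one, mul_comm]
      exact (Nat.even_mul_succ_self y).two_dvd
  rw [Nat.mul_div_cancel' h2]
  cases x with
  | zero => rfl
  | succ m => simp [Nat.succ_sub_one]; ring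

lemma term_bound (n k K : ℕ) (hk : k ≤ n) :
    k*(n-k) + k*(k-1)/2 + ((n-k)*(n+1) + (n-k)*((n-k)-1)/2) + k*K ≤
      if K ≤ n then (3 * n ^ 2 + n) / 2 else (n ^ 2 - n) / 2 + n * K := by
  obtain ⟨m, rfl⟩ : ∃ m, n = k + m := ⟨n - k, by omega⟩
  have e1 : k + m - k = m := by omega
  rw [e1]
  have ha := half_id k
  have hb := half_id m
  have hc := half_id (k+m)
  have hsq : (k+m)^2 = (k+m)*(k+m) := sq (k+m)
  have h3 : (3 * (k+m)^2 + (k+m)) / 2 = (k+m)*((k+m)-1)/2 + ((k+m)*(k+m) + (k+m)) := by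
    have : 3 * (k+m)^2 + (k+m) = ((k+m)*((k+m)-1)/2) * 2 + ((k+m)*(k+m) + (k+m)) * 2 := by
      rw [hsq]; omega
    omega
  have h4 : ((k+m)^2 - (k+m)) / 2 = (k+m)*((k+m)-1)/2 := by
    rw [hsq]; omega
  split
  · next hK =>
    rw [h3]
    nlinarith [Nat.mul_le_mul_left k hK, ha, hb, hc]
  · next hK =>
    rw [h4]
    have hK' : k + m + 1 ≤ K := by omega
    nlinarith [Nat.mul_le_mul_left m hK', ha, hb, hc]


lemma Qpoly_natDegree_le (n K : ℕ) :
    (Qpoly n K).natDegree ≤ if K ≤ n then (K ^ 2 - K) / 2 + (3 * n ^ 2 + n) / 2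
      else (K ^ 2 - K) / 2 + (n ^ 2 - n) / 2 + n * K := by
  have hKK' : K^2 - K = K * (K-1) := by
    cases K with
    | zero => simp
    | succ m =>
      rw [Nat.succ_sub_one]
      apply Nat.sub_eq_of_eq_add
      ring
  have hKK : (K^2 - K)/2 = K * (K-1) / 2 := by rw [hKK']
  have hprod : (∏ j ∈ Finset.range K, (1 - tQ * qQ ^ j)).natDegree ≤ K * (K-1) / 2 := by
    refine le_trans (natDegree_prod_le _ _) ?_
    rw [← Finset.sum_range_id]
    refine Finset.sum_le_sum fun j _ => ?_
    refine le_trans (natDegree_sub_le _ _) (max_le (by simp) ?_)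
    refine le_trans natDegree_mul_le ?_
    simp [tQ, qQ, natDegree_X_pow]
  have hsum : (∑ k ∈ Finset.range (n+1),
      (gaussBinom n k).map (Int.castRingHom (Polynomial ℤ)) * qQ ^ (k*(k-1)/2) *
      (∏ j ∈ Finset.range (n-k), (1 - qQ ^ (n+1) * qQ ^ j)) *
      (-(qQ ^ K * tQ)) ^ k).natDegree ≤
      if K ≤ n then (3 * n ^ 2 + n) / 2 else (n ^ 2 - n) / 2 + n * K := by
    refine natDegree_sum_le_of_forall_le _ _ fun k hk => ?_
    have hkn : k ≤ n := by simp at hk; omega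
    refine le_trans ?_ (term_bound n k K hkn)
    refine le_trans natDegree_mul_le ?_
    have h1 : ((gaussBinom n k).map (Int.castRingHom (Polynomial ℤ)) * qQ ^ (k*(k-1)/2) *
        (∏ j ∈ Finset.range (n-k), (1 - qQ ^ (n+1) * qQ ^ j))).natDegree ≤
        k*(n-k) + k*(k-1)/2 + ((n-k)*(n+1) + (n-k)*((n-k)-1)/2) := by
      refine le_trans natDegree_mul_le ?_
      have h2 : ((gaussBinom n k).map (Int.castRingHom (Polynomial ℤ)) *
          qQ ^ (k*(k-1)/2)).natDegree ≤ k*(n-k) + k*(k-1)/2 := by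
        refine le_trans natDegree_mul_le ?_
        gcongr
        · exact le_trans natDegree_map_le (gaussBinom_natDegree_le n k)
        · simp [qQ, natDegree_X_pow]
      have h3 : (∏ j ∈ Finset.range (n-k), (1 - qQ ^ (n+1) * qQ ^ j)).natDegree ≤
          (n-k)*(n+1) + (n-k)*((n-k)-1)/2 := by
        refine le_trans (natDegree_prod_le _ _) ?_
        have : ∀ j ∈ Finset.range (n-k), (1 - qQ ^ (n+1) * qQ ^ j : Polynomial (Polynomial ℤ)).natDegree ≤ (n+1) + j := by
          intro j _
          refine le_trans (natDegree_sub_le _ _) (max_le (by simp) ?_)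
          refine le_trans natDegree_mul_le ?_
          simp [qQ, natDegree_X_pow]
        refine le_trans (Finset.sum_le_sum this) ?_
        rw [Finset.sum_add_distrib, Finset.sum_const, Finset.sum_range_id,
          Finset.card_range, smul_eq_mul]
      omega
    have h4 : ((-(qQ ^ K * tQ)) ^ k : Polynomial (Polynomial ℤ)).natDegree ≤ k * K := by
      refine le_trans natDegree_pow_le ?_
      rw [natDegree_neg]
      refine Nat.mul_le_mul_left k (le_trans natDegree_mul_le ?_)
      simp [qQ, tQ, natDegree_X_pow]
    omega
  rw [hKK]
  refine le_trans natDegree_mul_le ?_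
  rcases le_or_gt K n with hc | hc
  · rw [if_pos hc] at hsum ⊢
    exact Nat.add_le_add hprod hsum
  · rw [if_neg (not_le.mpr hc)] at hsum ⊢
    exact le_trans (Nat.add_le_add hprod hsum) (le_of_eq (add_assoc _ _ _).symm)

lemma evalTQ_inj {P Q : Polynomial (Polynomial ℤ)}
    (h : ∀ q t : ℝ, 0 < |q| → |q| < 1 → evalTQ P q t = evalTQ Q q t) : P = Q := by
  have key : ∀ t : ℝ, (P - Q).map (Polynomial.eval₂RingHom (Int.castRingHom ℝ) t) = 0 := by
    intro t
    apply Polynomial.eq_zero_of_infinite_isRoot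
    refine Set.Infinite.mono (s := Set.Ioo (0:ℝ) (1/2)) ?_ ?_
    · intro q hq
      obtain ⟨h0, h1⟩ := hq
      have hq0 : 0 < |q| := by rw [abs_of_pos h0]; exact h0
      have hq1 : |q| < 1 := by rw [abs_of_pos h0]; linarith
      have := h q t hq0 hq1
      simp only [IsRoot, Set.mem_setOf_eq]
      rw [Polynomial.map_sub, eval_sub]
      rw [evalTQ, evalTQ] at this
      linarith
    · exact Set.Ioo_infinite (by norm_num)
  have hcoeff : ∀ i : ℕ, (P - Q).coeff i = 0 := by
    intro i
    have h2 : ∀ t : ℝ, Polynomial.eval t (((P - Q).coeff i).map (Int.castRingHom ℝ)) = 0 := by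
      intro t
      have h3 := congrArg (fun p => p.coeff i) (key t)
      simp only [coeff_map, coeff_zero] at h3
      rw [← eval₂_eq_eval_map]
      exact h3
    have h4 : ((P - Q).coeff i).map (Int.castRingHom ℝ) = 0 := by
      apply Polynomial.eq_zero_of_infinite_isRoot
      have : {x : ℝ | IsRoot (((P - Q).coeff i).map (Int.castRingHom ℝ)) x} = Set.univ := by
        ext x
        simp only [Set.mem_setOf_eq, Set.mem_univ, iff_true, IsRoot]
        simpa using h2 x
      rw [this]
      exact Set.infinite_univ
    exact (Polynomial.map_eq_zero_iff (Int.cast_injective)).mp h4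
  have : P - Q = 0 := Polynomial.ext fun i => by rw [hcoeff i, coeff_zero]
  exact sub_eq_zero.mp this

end Aux

/-- `deg_q ((t)_K B_n(q^K t)) ≤ (K²-K)/2 + (3n²+n)/2` for `K ≤ n` and
`≤ (K²-K)/2 + (n²-n)/2 + nK` for `K > n`. -/
theorem padeB_q_degree_bound (n K : ℕ) (P : Polynomial (Polynomial ℤ))
    (hP : ∀ q t : ℝ, 0 < |q| → |q| < 1 →
      evalTQ P q t = qPoch q t K * padeB q n (q ^ K * t)) :
    P.natDegree ≤ if K ≤ n then (K ^ 2 - K) / 2 + (3 * n ^ 2 + n) / 2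
      else (K ^ 2 - K) / 2 + (n ^ 2 - n) / 2 + n * K := by
  have h := evalTQ_inj (P := P) (Q := Qpoly n K)
    (fun q t h0 h1 => (hP q t h0 h1).trans (evalTQ_Qpoly n K q t h1).symm)
  rw [h]
  exact Qpoly_natDegree_le n K
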